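/- Let ξ_n > 0 and η_n > 0 be sequences with ξ_n η_n → 0 and n^{1/2} η_n → ∞, let k_n be integers with 1 ≤ k_n < n such that n − k_n is eventually constant equal to m, and suppose θ_n ∈ ℝ and σ_n ∈ (0,∞) satisfy θ_n/(σ_n ξ_n η_n) → ζ in the extended real line. Then p̃_n(θ_n, σ_n) → ∫_{|ζ|}^∞ ρ_m(s) ds as n → ∞ (interpreted as 0 when |ζ| = ∞). -/

import Mathlib

open MeasureTheory ProbabilityTheory Filter Set

/-- Standard normal cdf. -/
noncomputable def Phi (x : ℝ) : ℝ :=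
  ∫ t in Iic x, (Real.sqrt (2 * Real.pi))⁻¹ * Real.exp (-t ^ 2 / 2)

/-- Standard normal pdf. -/
noncomputable def stdPhi (t : ℝ) : ℝ :=
  (Real.sqrt (2 * Real.pi))⁻¹ * Real.exp (-t ^ 2 / 2)

/-- Extension of `Phi` to the extended reals, with `PhiE ⊤ = 1` and `PhiE ⊥ = 0`. -/
noncomputable def PhiE (z : EReal) : ℝ :=
  if z = ⊤ then 1 else if z = ⊥ then 0 else Phi z.toReal

/-- Density of `m^{-1/2}` times the square root of a chi-square with `m` degrees of freedom. -/
noncomputable def rho (m : ℕ) (s : ℝ) : ℝ :=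
  if 0 < s then
    (2 : ℝ) ^ ((1 : ℝ) - (m : ℝ) / 2) * (Real.Gamma ((m : ℝ) / 2))⁻¹ * Real.sqrt m *
      ((m : ℝ) * s ^ 2) ^ (((m : ℝ) - 1) / 2) * Real.exp (-(m : ℝ) * s ^ 2 / 2)
  else 0

/-- Unknown-variance variable deletion probability with `m` degrees of freedom. -/
noncomputable def ptdel (n m : ℕ) (ξ η θ σ : ℝ) : ℝ :=
  ∫ s in Ioi (0 : ℝ),
    (Phi (Real.sqrt n * (-θ / (σ * ξ) + s * η)) -
      Phi (Real.sqrt n * (-θ / (σ * ξ) - s * η))) * rho m s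


set_option linter.unusedVariables false

lemma stdPhi_nonneg (t : ℝ) : 0 ≤ stdPhi t := by
  unfold stdPhi; positivity
lemma integrable_stdPhi : Integrable stdPhi := by
  have h := (integrable_exp_neg_mul_sq (show (0:ℝ) < 1/2 by norm_num)).const_mul
    ((Real.sqrt (2*Real.pi))⁻¹)
  refine h.congr (Eventually.of_forall fun t => ?_)
  unfold stdPhi
  rw [show -t^2/2 = -(1/2)*t^2 by ring]
lemma integral_stdPhi : ∫ t, stdPhi t = 1 := by
  unfold stdPhi
  rw [MeasureTheory.integral_const_mul]
  have : ∀ t : ℝ, Real.exp (-t^2/2) = Real.exp (-(1/2)*t^2) := fun t => by ring_nf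
  simp_rw [this, integral_gaussian]
  rw [show Real.pi / (1/2) = 2 * Real.pi by ring]
  rw [inv_mul_cancel₀]
  exact ne_of_gt (Real.sqrt_pos.mpr (by positivity))
lemma Phi_eq (x : ℝ) : Phi x = ∫ t in Iic x, stdPhi t := rfl
lemma Phi_mono : Monotone Phi := by
  intro x y h
  rw [Phi_eq, Phi_eq]
  exact setIntegral_mono_set integrable_stdPhi.integrableOn
    (Eventually.of_forall stdPhi_nonneg)
    (HasSubset.Subset.eventuallyLE (Iic_subset_Iic.mpr h))
lemma Phi_nonneg (x : ℝ) : 0 ≤ Phi x :=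
  setIntegral_nonneg measurableSet_Iic fun t _ => stdPhi_nonneg t
lemma Phi_le_one (x : ℝ) : Phi x ≤ 1 := by
  rw [Phi_eq, ← integral_stdPhi]
  exact setIntegral_le_integral integrable_stdPhi (Eventually.of_forall stdPhi_nonneg)
lemma rho_nonneg (m : ℕ) (hm : 1 ≤ m) (s : ℝ) : 0 ≤ rho m s := by
  unfold rho
  split
  · have hG : 0 < Real.Gamma ((m : ℝ) / 2) :=
      Real.Gamma_pos_of_pos (by positivity)
    positivity
  · exact le_refl 0
lemma rho_measurable' (m : ℕ) (hm : 1 ≤ m) : Measurable (rho m) := by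
  unfold rho
  refine Measurable.ite (measurableSet_lt measurable_const measurable_id) ?_ measurable_const
  have h1 : Measurable fun s : ℝ => ((m : ℝ) * s ^ 2) ^ (((m : ℝ) - 1) / 2) := by
    have hc : Continuous fun x : ℝ => x ^ (((m : ℝ) - 1) / 2) :=
      Real.continuous_rpow_const (by
        have : (1 : ℝ) ≤ (m : ℝ) := by exact_mod_cast hm
        linarith)
    exact hc.measurable.comp ((measurable_id.pow_const 2).const_mul _)
  have h2 : Measurable fun s : ℝ => Real.exp (-(m : ℝ) * s ^ 2 / 2) :=
    Real.measurable_exp.comp (((measurable_id.pow_const 2).const_mul _).div_const 2)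
  exact ((h1.const_mul _).mul h2)
lemma rho_integrableOn (m : ℕ) (hm : 1 ≤ m) : IntegrableOn (rho m) (Ioi (0:ℝ)) := by
  set C : ℝ := (2 : ℝ) ^ ((1 : ℝ) - (m : ℝ) / 2) * (Real.Gamma ((m : ℝ) / 2))⁻¹ * Real.sqrt m *
    (m : ℝ) ^ (((m : ℝ) - 1) / 2) with hC
  have hb : (0:ℝ) < (m:ℝ)/2 := by
    have : (1 : ℝ) ≤ (m : ℝ) := by exact_mod_cast hm
    linarith
  have hint : Integrable (fun s : ℝ => C * (s ^ ((m:ℝ) - 1) * Real.exp (-((m:ℝ)/2) * s ^ 2))) :=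
    (integrable_rpow_mul_exp_neg_mul_sq hb (by
      have : (1 : ℝ) ≤ (m : ℝ) := by exact_mod_cast hm
      linarith)).const_mul C
  refine (hint.integrableOn).congr_fun (fun s hs => ?_) measurableSet_Ioi
  have hs0 : (0:ℝ) < s := hs
  unfold rho
  rw [if_pos hs0]
  have h1 : ((m : ℝ) * s ^ 2) ^ (((m : ℝ) - 1) / 2)
      = (m : ℝ) ^ (((m : ℝ) - 1) / 2) * s ^ ((m:ℝ) - 1) := by
    rw [Real.mul_rpow (by positivity) (by positivity)]
    congr 1
    rw [← Real.rpow_natCast s 2, ← Real.rpow_mul hs0.le]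
    congr 1
    ring
  have h2 : Real.exp (-(m : ℝ) * s ^ 2 / 2) = Real.exp (-((m:ℝ)/2) * s ^ 2) := by
    ring_nf
  rw [h1, h2, hC]
  ring
lemma Phi_tendsto_atTop : Tendsto Phi atTop (nhds 1) := by
  have hb : BddAbove (range Phi) := ⟨1, by rintro _ ⟨x, rfl⟩; exact Phi_le_one x⟩
  have h1 : Tendsto Phi atTop (nhds (⨆ x, Phi x)) := tendsto_atTop_ciSup Phi_mono hb
  have hseq : Tendsto (fun j : ℕ => Phi (j : ℝ)) atTop (nhds 1) := by
    have hU : (⋃ j : ℕ, Iic ((j : ℕ) : ℝ)) = univ := by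
      refine eq_univ_iff_forall.mpr fun x => ?_
      obtain ⟨j, hj⟩ := exists_nat_ge x
      exact mem_iUnion.mpr ⟨j, hj⟩
    have := tendsto_setIntegral_of_monotone (f := stdPhi) (μ := volume)
      (s := fun j : ℕ => Iic ((j : ℕ) : ℝ)) (fun j => measurableSet_Iic)
      (fun i j h => Iic_subset_Iic.mpr (by exact_mod_cast h))
      (by rw [hU]; simpa using integrable_stdPhi)
    rw [hU] at this
    simp only [Measure.restrict_univ, integral_stdPhi] at this
    simpa only [← Phi_eq] using this
  have h2 : Tendsto (fun j : ℕ => Phi (j : ℝ)) atTop (nhds (⨆ x, Phi x)) :=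
    h1.comp tendsto_natCast_atTop_atTop
  rw [tendsto_nhds_unique h2 hseq] at h1
  exact h1
lemma Phi_tendsto_atBot : Tendsto Phi atBot (nhds 0) := by
  have hb : BddBelow (range Phi) := ⟨0, by rintro _ ⟨x, rfl⟩; exact Phi_nonneg x⟩
  have h1 : Tendsto Phi atBot (nhds (⨅ x, Phi x)) := tendsto_atBot_ciInf Phi_mono hb
  have hseq : Tendsto (fun j : ℕ => Phi (-(j : ℝ))) atTop (nhds 0) := by
    have hI : (⋂ j : ℕ, Iic (-((j : ℕ) : ℝ))) = ∅ := by
      refine eq_empty_iff_forall_notMem.mpr fun x hx => ?_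
      obtain ⟨j, hj⟩ := exists_nat_gt (-x)
      have := mem_iInter.mp hx j
      simp only [mem_Iic] at this
      linarith
    have := Antitone.tendsto_setIntegral (f := stdPhi) (μ := volume)
      (s := fun j : ℕ => Iic (-((j : ℕ) : ℝ))) (fun j => measurableSet_Iic)
      (fun i j h => Iic_subset_Iic.mpr (by exact_mod_cast neg_le_neg (by exact_mod_cast h)))
      integrable_stdPhi.integrableOn
    rw [hI] at this
    simp only [Measure.restrict_empty, integral_zero_measure] at this
    simpa only [← Phi_eq] using this
  have h2 : Tendsto (fun j : ℕ => Phi (-(j : ℝ))) atTop (nhds (⨅ x, Phi x)) :=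
    h1.comp (tendsto_neg_atTop_atBot.comp tendsto_natCast_atTop_atTop)
  rw [tendsto_nhds_unique h2 hseq] at h1
  exact h1
lemma key_dct (m : ℕ) (hm : 1 ≤ m) (a c : ℕ → ℝ) (g : ℝ → ℝ)
    (hlim : ∀ᵐ s ∂(volume.restrict (Ioi (0:ℝ))),
      Tendsto (fun n => (Phi (a n * (s - c n)) - Phi (-(a n * (s + c n)))) * rho m s)
        atTop (nhds (g s))) :
    Tendsto (fun n => ∫ s in Ioi (0:ℝ),
        (Phi (a n * (s - c n)) - Phi (-(a n * (s + c n)))) * rho m s) atTop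
      (nhds (∫ s in Ioi (0:ℝ), g s)) := by
  refine tendsto_integral_of_dominated_convergence (rho m) ?_ (rho_integrableOn m hm) ?_ hlim
  · intro n
    have hPhi : Measurable Phi := Phi_mono.measurable
    exact (((hPhi.comp ((measurable_id.sub_const (c n)).const_mul (a n))).sub
      (hPhi.comp (((measurable_id.add_const (c n)).const_mul (a n)).neg))).mul
      (rho_measurable' m hm)).aestronglyMeasurable
  · intro n
    refine Eventually.of_forall fun s => ?_
    rw [Real.norm_eq_abs, abs_mul, abs_of_nonneg (rho_nonneg m hm s)]
    have hr := rho_nonneg m hm s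
    have habs : |Phi (a n * (s - c n)) - Phi (-(a n * (s + c n)))| ≤ 1 := by
      rw [abs_sub_le_iff]
      constructor
      · have := Phi_le_one (a n * (s - c n)); have := Phi_nonneg (-(a n * (s + c n))); linarith
      · have := Phi_le_one (-(a n * (s + c n))); have := Phi_nonneg (a n * (s - c n)); linarith
    calc |Phi (a n * (s - c n)) - Phi (-(a n * (s + c n)))| * rho m s
        ≤ 1 * rho m s := mul_le_mul_of_nonneg_right habs hr
      _ = rho m s := one_mul _

/-- consistent tuning, unknown-variance limit of the deletion probability when
`n - k_n` is eventually constant equal to `m`. -/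
theorem stmt_5 (ξ η : ℕ → ℝ) (hξ : ∀ n, 0 < ξ n) (hη : ∀ n, 0 < η n)
    (hxe : Tendsto (fun n : ℕ => ξ n * η n) atTop (nhds 0))
    (hne : Tendsto (fun n : ℕ => Real.sqrt n * η n) atTop atTop)
    (k : ℕ → ℕ) (hk : ∀ n, 2 ≤ n → 1 ≤ k n ∧ k n < n)
    (m : ℕ) (hm : ∀ᶠ n in atTop, n - k n = m)
    (θ σ : ℕ → ℝ) (hσ : ∀ n, 0 < σ n)
    (ζ : EReal)
    (hζ : Tendsto (fun n : ℕ => ((θ n / (σ n * ξ n * η n) : ℝ) : EReal)) atTop (nhds ζ)) :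
    (∀ ζr : ℝ, ζ = (ζr : EReal) →
        Tendsto (fun n : ℕ => ptdel n (n - k n) (ξ n) (η n) (θ n) (σ n)) atTop
          (nhds (∫ s in Ioi |ζr|, rho m s))) ∧
    ((ζ = ⊤ ∨ ζ = ⊥) →
        Tendsto (fun n : ℕ => ptdel n (n - k n) (ξ n) (η n) (θ n) (σ n)) atTop (nhds 0)) := by
  set c : ℕ → ℝ := fun n => θ n / (σ n * ξ n * η n) with hcdef
  set a : ℕ → ℝ := fun n => Real.sqrt n * η n with hadef
  have hane : Tendsto a atTop atTop := hne
  have hm1 : 1 ≤ m := by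
    obtain ⟨n, hnm, hn2⟩ := (hm.and (eventually_ge_atTop 2)).exists
    have := hk n hn2
    omega
  have hEq : (fun n : ℕ => ptdel n (n - k n) (ξ n) (η n) (θ n) (σ n)) =ᶠ[atTop]
      fun n => ∫ s in Ioi (0:ℝ),
        (Phi (a n * (s - c n)) - Phi (-(a n * (s + c n)))) * rho m s := by
    filter_upwards [hm] with n hn
    rw [ptdel, hn]
    refine setIntegral_congr_fun measurableSet_Ioi fun s _ => ?_
    have hξ' := (hξ n).ne'
    have hη' := (hη n).ne'
    have hσ' := (hσ n).ne'
    have e1 : Real.sqrt n * (-θ n / (σ n * ξ n) + s * η n) = a n * (s - c n) := by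
      simp only [hadef, hcdef]
      field_simp
      ring
    have e2 : Real.sqrt n * (-θ n / (σ n * ξ n) - s * η n) = -(a n * (s + c n)) := by
      simp only [hadef, hcdef]
      field_simp
      ring
    rw [e1, e2]
  constructor
  · rintro ζr rfl
    have hcr : Tendsto c atTop (nhds ζr) := EReal.tendsto_coe.mp hζ
    have hlim : ∀ᵐ s ∂(volume.restrict (Ioi (0:ℝ))),
        Tendsto (fun n => (Phi (a n * (s - c n)) - Phi (-(a n * (s + c n)))) * rho m s)
          atTop (nhds (Set.indicator (Ioi |ζr|) (rho m) s)) := by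
      have h0 : ∀ᵐ s : ℝ, s ≠ |ζr| := by
        rw [ae_iff]
        simp only [ne_eq, not_not, setOf_eq_eq_singleton]
        exact measure_singleton _
      filter_upwards [ae_restrict_mem measurableSet_Ioi, ae_restrict_of_ae h0] with s hs hsne
      have hs0 : (0:ℝ) < s := hs
      have hsub : Tendsto (fun n => s - c n) atTop (nhds (s - ζr)) :=
        tendsto_const_nhds.sub hcr
      have hadd : Tendsto (fun n => s + c n) atTop (nhds (s + ζr)) :=
        tendsto_const_nhds.add hcr
      by_cases h1 : |ζr| < s
      · have hp1 : 0 < s - ζr := by have := le_abs_self ζr; linarith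
        have hp2 : 0 < s + ζr := by have := neg_abs_le ζr; linarith
        have t1 : Tendsto (fun n => Phi (a n * (s - c n))) atTop (nhds 1) :=
          Phi_tendsto_atTop.comp (hane.atTop_mul_pos hp1 hsub)
        have t2 : Tendsto (fun n => Phi (-(a n * (s + c n)))) atTop (nhds 0) :=
          Phi_tendsto_atBot.comp (tendsto_neg_atTop_atBot.comp (hane.atTop_mul_pos hp2 hadd))
        have := (t1.sub t2).mul_const (rho m s)
        simpa [Set.indicator_of_mem (mem_Ioi.mpr h1)] using this
      · have h1' : s < |ζr| := lt_of_le_of_ne (not_lt.mp h1) hsne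
        have hind : Set.indicator (Ioi |ζr|) (rho m) s = 0 :=
          Set.indicator_of_notMem (by simpa using h1) _
        rw [hind]
        by_cases hz : 0 ≤ ζr
        · have habs : |ζr| = ζr := abs_of_nonneg hz
          have hn1 : s - ζr < 0 := by rw [habs] at h1'; linarith
          have hp2 : 0 < s + ζr := by linarith
          have t1 : Tendsto (fun n => Phi (a n * (s - c n))) atTop (nhds 0) :=
            Phi_tendsto_atBot.comp (hane.atTop_mul_neg hn1 hsub)
          have t2 : Tendsto (fun n => Phi (-(a n * (s + c n)))) atTop (nhds 0) :=
            Phi_tendsto_atBot.comp (tendsto_neg_atTop_atBot.comp (hane.atTop_mul_pos hp2 hadd))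
          have := (t1.sub t2).mul_const (rho m s)
          simpa using this
        · have hz' : ζr < 0 := not_le.mp hz
          have habs : |ζr| = -ζr := abs_of_neg hz'
          have hn2 : s + ζr < 0 := by rw [habs] at h1'; linarith
          have hp1 : 0 < s - ζr := by linarith
          have t1 : Tendsto (fun n => Phi (a n * (s - c n))) atTop (nhds 1) :=
            Phi_tendsto_atTop.comp (hane.atTop_mul_pos hp1 hsub)
          have t2 : Tendsto (fun n => Phi (-(a n * (s + c n)))) atTop (nhds 1) :=
            Phi_tendsto_atTop.comp (tendsto_neg_atBot_atTop.comp (hane.atTop_mul_neg hn2 hadd))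
          have := (t1.sub t2).mul_const (rho m s)
          simpa using this
    have hK := key_dct m hm1 a c _ hlim
    have hval : ∫ s in Ioi (0:ℝ), Set.indicator (Ioi |ζr|) (rho m) s
        = ∫ s in Ioi |ζr|, rho m s := by
      rw [setIntegral_indicator measurableSet_Ioi, Ioi_inter_Ioi,
        max_eq_right (abs_nonneg ζr)]
    rw [hval] at hK
    exact hK.congr' hEq.symm
  · intro hζtop
    have hlim : ∀ᵐ s ∂(volume.restrict (Ioi (0:ℝ))),
        Tendsto (fun n => (Phi (a n * (s - c n)) - Phi (-(a n * (s + c n)))) * rho m s)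
          atTop (nhds ((fun _ : ℝ => (0:ℝ)) s)) := by
      rcases hζtop with rfl | rfl
      · have hcr : Tendsto c atTop atTop := by
          rw [tendsto_atTop]
          intro b
          filter_upwards [EReal.tendsto_nhds_top_iff_real.mp hζ b] with n hn
          exact le_of_lt (by exact_mod_cast hn)
        refine Eventually.of_forall fun s => ?_
        have hsub : Tendsto (fun n => s - c n) atTop atBot := by
          have h := tendsto_atBot_add_const_left atTop s (tendsto_neg_atTop_atBot.comp hcr)
          simpa [sub_eq_add_neg, Function.comp] using h
        have hadd : Tendsto (fun n => s + c n) atTop atTop :=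
          tendsto_atTop_add_const_left _ s hcr
        have t1 : Tendsto (fun n => Phi (a n * (s - c n))) atTop (nhds 0) :=
          Phi_tendsto_atBot.comp (hane.atTop_mul_atBot₀ hsub)
        have t2 : Tendsto (fun n => Phi (-(a n * (s + c n)))) atTop (nhds 0) :=
          Phi_tendsto_atBot.comp (tendsto_neg_atTop_atBot.comp (hane.atTop_mul_atTop₀ hadd))
        have := (t1.sub t2).mul_const (rho m s)
        simpa using this
      · have hcr : Tendsto c atTop atBot := by
          rw [tendsto_atBot]
          intro b
          filter_upwards [EReal.tendsto_nhds_bot_iff_real.mp hζ b] with n hn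
          exact le_of_lt (by exact_mod_cast hn)
        refine Eventually.of_forall fun s => ?_
        have hsub : Tendsto (fun n => s - c n) atTop atTop := by
          have h := tendsto_atTop_add_const_left atTop s (tendsto_neg_atBot_atTop.comp hcr)
          simpa [sub_eq_add_neg, Function.comp] using h
        have hadd : Tendsto (fun n => s + c n) atTop atBot :=
          tendsto_atBot_add_const_left _ s hcr
        have t1 : Tendsto (fun n => Phi (a n * (s - c n))) atTop (nhds 1) :=
          Phi_tendsto_atTop.comp (hane.atTop_mul_atTop₀ hsub)
        have t2 : Tendsto (fun n => Phi (-(a n * (s + c n)))) atTop (nhds 1) :=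
          Phi_tendsto_atTop.comp (tendsto_neg_atBot_atTop.comp (hane.atTop_mul_atBot₀ hadd))
        have := (t1.sub t2).mul_const (rho m s)
        simpa using this
    have hK := key_dct m hm1 a c _ hlim
    simp only [integral_zero] at hK
    exact hK.congr' hEq.symm
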